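/- Let D be a semicomplete digraph and x_1, y_1, x_2, y_2 four (not necessarily distinct) vertices such that D contains an (x_i,y_i)-path for i = 1, 2, but no pair of arc-disjoint (x_1,y_1)- and (x_2,y_2)-paths. If x_1, y_1, x_2, y_2 do not all lie in the same strong component of D, then x_1 = x_2, y_1 = y_2, and {x_1} and {y_1} are singleton strong components that are consecutive in the acyclic ordering of the strong components of D. -/

import Mathlib

variable {V : Type*}

/-- A digraph (given by its arc relation `A`) is semicomplete if every pair of
distinct vertices is joined by an arc in at least one direction. -/
def Semicomplete (A : V → V → Prop) : Prop :=
  ∀ x y : V, x ≠ y → A x y ∨ A y x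

/-- Reachability by a directed path. -/
def Reach (A : V → V → Prop) : V → V → Prop := Relation.ReflTransGen A

/-- Reachability inside the induced subdigraph on `S`. -/
def ReachOn (A : V → V → Prop) (S : Set V) : V → V → Prop :=
  Relation.ReflTransGen (fun a b => a ∈ S ∧ b ∈ S ∧ A a b)

/-- A digraph is strong if every vertex reaches every other vertex. -/
def Strong (A : V → V → Prop) : Prop := ∀ x y : V, Reach A x y

/-- The induced subdigraph on `S` is strong. -/
def StrongOn (A : V → V → Prop) (S : Set V) : Prop :=
  ∀ a ∈ S, ∀ b ∈ S, ReachOn A S a b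

/-- `Out(D)`: vertices which can reach every other vertex. -/
def OutSet (A : V → V → Prop) : Set V := {x | ∀ y, Reach A x y}

/-- `In(D)`: vertices reachable from every other vertex. -/
def InSet (A : V → V → Prop) : Set V := {x | ∀ y, Reach A y x}

/-- Deletion of a single arc. -/
def Del (A : V → V → Prop) (e : V × V) : V → V → Prop :=
  fun a b => A a b ∧ (a, b) ≠ e

/-- The arcs of a path represented as a list of vertices. -/
def pathArcs (p : List V) : List (V × V) := p.zip p.tail

/-- `p` is a directed path from `x` to `y` in the digraph `A`. -/
def IsPathOn (A : V → V → Prop) (x y : V) (p : List V) : Prop :=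
  p ≠ [] ∧ p.head? = some x ∧ p.getLast? = some y ∧ p.Nodup ∧ p.Chain' A

/-- There are arc-disjoint `(x₁,y₁)`- and `(x₂,y₂)`-paths. -/
def ArcDisjointPaths (A : V → V → Prop) (x₁ y₁ x₂ y₂ : V) : Prop :=
  ∃ p q : List V, IsPathOn A x₁ y₁ p ∧ IsPathOn A x₂ y₂ q ∧
    ∀ e ∈ pathArcs p, e ∉ pathArcs q

/-- `B` is (the arc set of) an out-branching of `A` rooted at `u`. -/
def IsOutBranching (A : V → V → Prop) (u : V) (B : Set (V × V)) : Prop :=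
  (∀ e ∈ B, A e.1 e.2) ∧ (∀ w, (w, u) ∉ B) ∧
  (∀ v : V, v ≠ u → ∃! w, (w, v) ∈ B) ∧
  (∀ v : V, Relation.ReflTransGen (fun a b => (a, b) ∈ B) u v)

/-- `B` is (the arc set of) an in-branching of `A` rooted at `v`. -/
def IsInBranching (A : V → V → Prop) (v : V) (B : Set (V × V)) : Prop :=
  (∀ e ∈ B, A e.1 e.2) ∧ (∀ w, (v, w) ∉ B) ∧
  (∀ x : V, x ≠ v → ∃! w, (x, w) ∈ B) ∧
  (∀ x : V, Relation.ReflTransGen (fun a b => (a, b) ∈ B) x v)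

/-- A good `(u,v)`-pair: an out-branching rooted at `u` arc-disjoint from an
in-branching rooted at `v`. -/
def GoodPair (A : V → V → Prop) (u v : V) : Prop :=
  ∃ Bp Bm : Set (V × V), IsOutBranching A u Bp ∧ IsInBranching A v Bm ∧ Disjoint Bp Bm

lemma reach_of_chain {A : V → V → Prop} :
    ∀ (p : List V) (x y : V), p.Chain' A → p.head? = some x → p.getLast? = some y →
      Relation.ReflTransGen A x y
  | [], _, _, _, hh, _ => by simp at hh
  | [a], x, y, _, hh, hl => by
      simp at hh hl; subst hh; rw [hl]
  | a :: b :: t, x, y, hc, hh, hl => by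
      simp at hh; subst hh
      rw [List.Chain', List.isChain_cons_cons] at hc
      rw [List.getLast?_cons_cons] at hl
      exact Relation.ReflTransGen.head hc.1 (reach_of_chain (b :: t) b y hc.2 rfl hl)

lemma exists_path_of_reach {R : V → V → Prop} {a b : V}
    (h : Relation.ReflTransGen R a b) :
    ∃ p : List V, p ≠ [] ∧ p.head? = some a ∧ p.getLast? = some b ∧ p.Nodup ∧
      p.Chain' R ∧ ∀ v ∈ p, Relation.ReflTransGen R a v := by
  induction h with
  | refl =>
      refine ⟨[a], by simp, by simp, by simp, by simp, by simp [List.Chain'], ?_⟩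
      intro v hv; simp at hv; subst hv; exact Relation.ReflTransGen.refl
  | @tail c d hac hcd ih =>
      obtain ⟨p, hne, hh, hl, hnd, hch, hmem⟩ := ih
      by_cases hd : d ∈ p
      · obtain ⟨s, t, rfl⟩ := List.append_of_mem hd
        have hh' : (s ++ [d]).head? = some a := by
          rcases s with _ | ⟨u, s'⟩
          · simp at hh ⊢; exact hh
          · simp at hh ⊢; exact hh
        refine ⟨s ++ [d], by simp, hh', List.getLast?_concat, ?_, ?_, ?_⟩
        · exact hnd.sublist (by simpa using (List.sublist_append_left (s ++ [d]) t))
        · exact hch.prefix ⟨t, by simp⟩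
        · intro v hv
          refine hmem v ?_
          rcases List.mem_append.1 hv with h | h
          · exact List.mem_append.2 (Or.inl h)
          · simp at h; subst h; simp
      · refine ⟨p ++ [d], by simp, ?_, List.getLast?_concat, ?_, ?_, ?_⟩
        · rw [List.head?_append, hh]; rfl
        · simp [List.nodup_append, hnd, hd]; exact fun a ha h => hd (h ▸ ha)
        · refine List.isChain_append.2 ⟨hch, by simp, ?_⟩
          intro x hx y hy
          simp at hy; subst hy
          rw [hl] at hx; simp at hx; subst hx; exact hcd
        · intro v hv
          rcases List.mem_append.1 hv with h | h
          · exact hmem v h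
          · simp at h; subst h; exact hac.tail hcd

lemma arcs_rel {R : V → V → Prop} :
    ∀ (p : List V), p.Chain' R → ∀ e ∈ pathArcs p, R e.1 e.2
  | [] => by simp [pathArcs]
  | [a] => by simp [pathArcs]
  | a :: b :: t => by
      intro hc e he
      rw [List.Chain', List.isChain_cons_cons] at hc
      simp only [pathArcs, List.tail_cons, List.zip_cons_cons] at he
      rcases List.mem_cons.1 he with rfl | he'
      · exact hc.1
      · exact arcs_rel (b :: t) hc.2 e he'

lemma reachOn_of_reach {A : V → V → Prop} {a b : V}
    (hab : Reach A a b) (hba : Reach A b a) :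
    Relation.ReflTransGen
      (fun u w => (Reach A a u ∧ Reach A u a) ∧ (Reach A a w ∧ Reach A w a) ∧ A u w) a b := by
  have key : ∀ c : V, Reach A a c → Reach A c a →
      Relation.ReflTransGen
        (fun u w => (Reach A a u ∧ Reach A u a) ∧ (Reach A a w ∧ Reach A w a) ∧ A u w) a c := by
    intro c hac
    induction hac with
    | refl => intro _; exact Relation.ReflTransGen.refl
    | @tail m n hm hmn ih =>
        intro hna
        have hma : Reach A m a := Relation.ReflTransGen.trans (Relation.ReflTransGen.single hmn) hna
        exact (ih hma).tail ⟨⟨hm, hma⟩, ⟨hm.tail hmn, hna⟩, hmn⟩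
  exact key b hab hba

lemma comp_path {A : V → V → Prop} {a b : V}
    (hab : Reach A a b) (hba : Reach A b a) :
    ∃ p : List V, IsPathOn A a b p ∧
      (∀ v ∈ p, Reach A a v ∧ Reach A v a) ∧
      p.Chain' (fun u w => (Reach A a u ∧ Reach A u a) ∧ (Reach A a w ∧ Reach A w a) ∧ A u w) := by
  obtain ⟨p, hne, hh, hl, hnd, hch, hmem⟩ := exists_path_of_reach (reachOn_of_reach hab hba)
  refine ⟨p, ⟨hne, hh, hl, hnd, hch.imp fun u w h => h.2.2⟩, ?_, hch⟩
  intro v hv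
  rcases (hmem v hv).cases_tail with h | ⟨c, _, hc⟩
  · subst h; exact ⟨Relation.ReflTransGen.refl, Relation.ReflTransGen.refl⟩
  · exact hc.2.1


/-- If a semicomplete digraph has `(x₁,y₁)`- and `(x₂,y₂)`-paths but no
arc-disjoint such pair, and the four vertices are not all in one strong
component, then `x₁ = x₂`, `y₁ = y₂` and `{x₁}, {y₁}` are consecutive singleton
strong components. -/
theorem stmt16 [Fintype V] (A : V → V → Prop) (hsc : Semicomplete A)
    (hirr : Irreflexive A) (x₁ y₁ x₂ y₂ : V)
    (h1 : ∃ p : List V, IsPathOn A x₁ y₁ p)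
    (h2 : ∃ p : List V, IsPathOn A x₂ y₂ p)
    (hno : ¬ ArcDisjointPaths A x₁ y₁ x₂ y₂)
    (hns : ¬ ((Reach A x₁ y₁ ∧ Reach A y₁ x₁) ∧ (Reach A x₁ x₂ ∧ Reach A x₂ x₁) ∧
      (Reach A x₁ y₂ ∧ Reach A y₂ x₁))) :
    x₁ = x₂ ∧ y₁ = y₂ ∧ x₁ ≠ y₁ ∧
      (∀ w, Reach A x₁ w → Reach A w x₁ → w = x₁) ∧
      (∀ w, Reach A y₁ w → Reach A w y₁ → w = y₁) ∧
      A x₁ y₁ ∧ ¬ ∃ w, w ≠ x₁ ∧ w ≠ y₁ ∧ Reach A x₁ w ∧ Reach A w y₁ := by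
  classical
  obtain ⟨p1, hp1⟩ := h1
  obtain ⟨p2, hp2⟩ := h2
  have rtrans : ∀ {u v w : V}, Reach A u v → Reach A v w → Reach A u w :=
    fun h h' => Relation.ReflTransGen.trans h h'
  have rrefl : ∀ u : V, Reach A u u := fun _ => Relation.ReflTransGen.refl
  have hr1 : Reach A x₁ y₁ := reach_of_chain p1 x₁ y₁ hp1.2.2.2.2 hp1.2.1 hp1.2.2.1
  have hr2 : Reach A x₂ y₂ := reach_of_chain p2 x₂ y₂ hp2.2.2.2.2 hp2.2.1 hp2.2.2.1
  have arc : ∀ u v : V, ¬ Reach A v u → A u v := by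
    intro u v h
    have hne : u ≠ v := by rintro rfl; exact h (rrefl u)
    rcases hsc u v hne with h' | h'
    · exact h'
    · exact absurd (Relation.ReflTransGen.single h') h
  have single_path : ∀ u v : V, A u v → u ≠ v → IsPathOn A u v [u, v] := by
    intro u v h hne
    exact ⟨by simp, by simp, by simp, by simp [hne], by simp [List.Chain', h]⟩
  have arcs_pair : ∀ u v : V, pathArcs [u, v] = [(u, v)] := fun u v => rfl
  -- Step 1: x₁ and y₁ are in different strong components
  have M1 : ¬ Reach A y₁ x₁ := by
    intro hyx
    by_cases h2' : Reach A y₂ x₂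
    · have hsep : ¬ (Reach A x₁ x₂ ∧ Reach A x₂ x₁) := by
        intro hx
        exact hns ⟨⟨hr1, hyx⟩, hx, ⟨rtrans hx.1 hr2, rtrans h2' hx.2⟩⟩
      obtain ⟨p, hp, hpv, -⟩ := comp_path hr1 hyx
      obtain ⟨q, hq, hqv, -⟩ := comp_path hr2 h2'
      refine hno ⟨p, q, hp, hq, ?_⟩
      rintro ⟨e1, e2⟩ hep heq
      simp only [pathArcs] at hep heq
      have h1' := hpv e1 (List.of_mem_zip hep).1
      have h2'' := hqv e1 (List.of_mem_zip heq).1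
      exact hsep ⟨rtrans h1'.1 h2''.2, rtrans h2''.1 h1'.2⟩
    · have hA2 : A x₂ y₂ := arc _ _ h2'
      have hne2 : x₂ ≠ y₂ := by rintro rfl; exact h2' (rrefl x₂)
      obtain ⟨p, hp, hpv, -⟩ := comp_path hr1 hyx
      refine hno ⟨p, [x₂, y₂], hp, single_path _ _ hA2 hne2, ?_⟩
      rintro ⟨e1, e2⟩ hep heq
      rw [arcs_pair] at heq
      simp at heq
      obtain ⟨rfl, rfl⟩ := heq
      simp only [pathArcs] at hep
      have h1' := hpv e1 (List.of_mem_zip hep).1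
      have h2'' := hpv e2 (List.mem_of_mem_tail (List.of_mem_zip hep).2)
      exact h2' (rtrans h2''.2 h1'.1)
  have hA1 : A x₁ y₁ := arc _ _ M1
  have hne1 : x₁ ≠ y₁ := by rintro rfl; exact M1 (rrefl x₁)
  -- Step 2: x₂ and y₂ are in different strong components
  have M2 : ¬ Reach A y₂ x₂ := by
    intro hyx
    obtain ⟨q, hq, hqv, -⟩ := comp_path hr2 hyx
    refine hno ⟨[x₁, y₁], q, single_path _ _ hA1 hne1, hq, ?_⟩
    rintro ⟨e1, e2⟩ hep heq
    rw [arcs_pair] at hep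
    simp at hep
    obtain ⟨rfl, rfl⟩ := hep
    simp only [pathArcs] at heq
    have h1' := hqv e1 (List.of_mem_zip heq).1
    have h2'' := hqv e2 (List.mem_of_mem_tail (List.of_mem_zip heq).2)
    exact M1 (rtrans h2''.2 h1'.1)
  have hA2 : A x₂ y₂ := arc _ _ M2
  have hne2 : x₂ ≠ y₂ := by rintro rfl; exact M2 (rrefl x₂)
  -- Step 3: the endpoints coincide
  have M3 : x₁ = x₂ ∧ y₁ = y₂ := by
    by_contra hC
    refine hno ⟨[x₁, y₁], [x₂, y₂], single_path _ _ hA1 hne1, single_path _ _ hA2 hne2, ?_⟩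
    rintro ⟨e1, e2⟩ hep heq
    rw [arcs_pair] at hep heq
    simp at hep heq
    obtain ⟨rfl, rfl⟩ := hep
    exact hC ⟨heq.1, heq.2⟩
  obtain ⟨hx12, hy12⟩ := M3
  subst hx12
  subst hy12
  -- Step 4: {x₁} is a singleton strong component
  have M4 : ∀ w, Reach A x₁ w → Reach A w x₁ → w = x₁ := by
    intro w hxw hwx
    by_contra hwne
    have hy1w : ¬ Reach A y₁ w := fun h => M1 (rtrans h hwx)
    have hAwy : A w y₁ := arc _ _ hy1w
    obtain ⟨p, hp, hpv, hpc⟩ := comp_path hxw hwx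
    have hynp : y₁ ∉ p := fun hy => M1 (hpv y₁ hy).2
    have hchain : (p ++ [y₁]).Chain' (fun u v => A u v ∧ (u, v) ≠ (x₁, y₁)) := by
      refine List.isChain_append.2 ⟨hpc.imp ?_, by simp, ?_⟩
      · intro u v h
        refine ⟨h.2.2, fun he => ?_⟩
        have hv : v = y₁ := congrArg Prod.snd he
        exact M1 (by rw [← hv]; exact h.2.1.2)
      · intro u hu v hv
        simp at hv; subst hv
        rw [hp.2.2.1] at hu
        simp at hu; subst hu
        exact ⟨hAwy, by simp [hwne]⟩
    have hQ : IsPathOn A x₁ y₁ (p ++ [y₁]) := by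
      refine ⟨by simp, ?_, List.getLast?_concat, ?_, hchain.imp fun u v h => h.1⟩
      · rw [List.head?_append, hp.2.1]; rfl
      · simp [List.nodup_append, hp.2.2.2.1, hynp]; exact fun a ha h => hynp (h ▸ ha)
    refine hno ⟨[x₁, y₁], p ++ [y₁], single_path _ _ hA1 hne1, hQ, ?_⟩
    rintro ⟨e1, e2⟩ hep heq
    rw [arcs_pair] at hep
    simp at hep
    obtain ⟨rfl, rfl⟩ := hep
    exact (arcs_rel _ hchain _ heq).2 rfl
  -- Step 5: {y₁} is a singleton strong component
  have M5 : ∀ w, Reach A y₁ w → Reach A w y₁ → w = y₁ := by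
    intro w hyw hwy
    by_contra hwne
    have hwx : ¬ Reach A w x₁ := fun h => M1 (rtrans hyw h)
    have hAxw : A x₁ w := arc _ _ hwx
    obtain ⟨q, hq, hqv, hqc⟩ := comp_path hwy hyw
    have hx1q : x₁ ∉ q := fun hx => hwx (hqv x₁ hx).1
    obtain ⟨c, q', rfl⟩ : ∃ c q', q = c :: q' := by
      rcases q with _ | ⟨c, q'⟩
      · exact absurd rfl hq.1
      · exact ⟨c, q', rfl⟩
    have hcw : c = w := by have := hq.2.1; simp at this; exact this
    subst hcw
    have hchain : (x₁ :: c :: q').Chain' (fun u v => A u v ∧ (u, v) ≠ (x₁, y₁)) := by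
      rw [List.Chain', List.isChain_cons_cons]
      constructor
      · exact ⟨hAxw, by simp [hwne]⟩
      · refine hqc.imp ?_
        intro u v h
        refine ⟨h.2.2, fun he => ?_⟩
        have hu : u = x₁ := congrArg Prod.fst he
        exact hwx (by rw [← hu]; exact h.1.1)
    have hQ : IsPathOn A x₁ y₁ (x₁ :: c :: q') := by
      refine ⟨by simp, by simp, ?_, ?_, hchain.imp fun u v h => h.1⟩
      · rw [List.getLast?_cons_cons]; exact hq.2.2.1
      · rw [List.nodup_cons]; exact ⟨hx1q, hq.2.2.2.1⟩
    refine hno ⟨[x₁, y₁], x₁ :: c :: q', single_path _ _ hA1 hne1, hQ, ?_⟩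
    rintro ⟨e1, e2⟩ hep heq
    rw [arcs_pair] at hep
    simp at hep
    obtain ⟨rfl, rfl⟩ := hep
    exact (arcs_rel _ hchain _ heq).2 rfl
  -- Step 6: the components are consecutive
  refine ⟨rfl, rfl, hne1, M4, M5, hA1, ?_⟩
  rintro ⟨w, hwnex, hwney, hrxw, hrwy⟩
  have h1' : ¬ Reach A w x₁ := fun h => hwnex (M4 w hrxw h)
  have hAxw : A x₁ w := arc _ _ h1'
  have h2' : ¬ Reach A y₁ w := fun h => hwney (M5 w h hrwy)
  have hAwy : A w y₁ := arc _ _ h2'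
  refine hno ⟨[x₁, y₁], [x₁, w, y₁], single_path _ _ hA1 hne1, ?_, ?_⟩
  · refine ⟨by simp, by simp, by simp, ?_, by simp [List.Chain', hAxw, hAwy]⟩
    simp [hne1, hwney, Ne.symm hwnex]
  · rintro ⟨e1, e2⟩ hep heq
    rw [arcs_pair] at hep
    simp at hep
    have harcs : pathArcs [x₁, w, y₁] = [(x₁, w), (w, y₁)] := rfl
    rw [harcs] at heq
    simp at heq
    rcases heq with h | h
    · exact hwney (h.2.symm.trans hep.2)
    · exact hwnex (h.1.symm.trans hep.1)
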